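/- Let ρ > 0, let F = matr(F_tensor) for a super-symmetric 2d-th order tensor F_tensor, let X*_PNP(ρ) be an optimal solution of max{tr(FX) − ρ‖X‖_* : tr(X)=1, matr^{-1}(X) super-symmetric, X symmetric}, let v be the optimal value of max{tr(FX) : ‖X‖_* = 1, X symmetric and matr^{-1}(X) super-symmetric}, and let F_0 = max_i F_{i…i}. If Eig^-(X) denotes the sum of negative eigenvalues of X, then 2(ρ − v)·|Eig^-(X*_PNP(ρ))| ≤ v − F_0. -/
import Mathlib


/-- Super-symmetry: invariance of entries under permutations of index positions. -/
def SuperSym {ι n : Type*} (A : (ι → n) → ℝ) : Prop :=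
  ∀ (σ : Equiv.Perm ι) (i : ι → n), A (i ∘ σ) = A i

/-- The 2d-th order tensor `matr⁻¹(X)` corresponding to a matrix `X` indexed by
`(Fin d → Fin n)`. -/
def matrInv {d n : ℕ} (X : Matrix (Fin d → Fin n) (Fin d → Fin n) ℝ) :
    (Fin d ⊕ Fin d → Fin n) → ℝ :=
  fun i => X (i ∘ Sum.inl) (i ∘ Sum.inr)

open Classical in
/-- Nuclear norm of a real symmetric matrix: sum of absolute values of its eigenvalues
(junk value 0 for non-Hermitian matrices). -/
noncomputable def nuclearNorm {I : Type*} [Fintype I] [DecidableEq I]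
    (X : Matrix I I ℝ) : ℝ :=
  if h : X.IsHermitian then ∑ i, |h.eigenvalues i| else 0

open Classical in
/-- `Eig^-(X)`: the sum of the negative eigenvalues of a real symmetric matrix. -/
noncomputable def negEigSum {I : Type*} [Fintype I] [DecidableEq I]
    (X : Matrix I I ℝ) : ℝ :=
  if h : X.IsHermitian then
    ∑ i ∈ Finset.univ.filter (fun i => h.eigenvalues i < 0), h.eigenvalues i
  else 0


section Aux
open Polynomial Matrix Finset

lemma isHermitian_of_isSymm {I : Type*} [Fintype I] [DecidableEq I]
    {A : Matrix I I ℝ} (hA : A.IsSymm) : A.IsHermitian := by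
  unfold Matrix.IsHermitian
  ext i j
  rw [Matrix.conjTranspose_apply]
  simpa using congrFun (congrFun hA i) j

lemma charpoly_unitary_conj {I : Type*} [Fintype I] [DecidableEq I]
    (U : Matrix.unitaryGroup I ℝ) (B : Matrix I I ℝ) :
    ((U : Matrix I I ℝ) * B * star (U : Matrix I I ℝ)).charpoly = B.charpoly := by
  set V : Matrix I I ℝ := (U : Matrix I I ℝ)
  have h1 : V * star V = 1 := Matrix.mem_unitaryGroup_iff.mp U.2
  have hdiag : ∀ M : Matrix I I ℝ,
      Matrix.charmatrix M = Matrix.diagonal (fun _ => (X : ℝ[X])) - M.map C := by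
    intro M; ext i j; rw [Matrix.charmatrix_apply, Matrix.sub_apply, Matrix.map_apply]
  have hcomm : ∀ M : Matrix I I ℝ[X],
      M * Matrix.diagonal (fun _ => (X : ℝ[X])) = Matrix.diagonal (fun _ => (X : ℝ[X])) * M := by
    intro M; ext i j
    rw [Matrix.mul_diagonal, Matrix.diagonal_mul, mul_comm]
  have key : Matrix.charmatrix (V * B * star V)
      = V.map C * Matrix.charmatrix B * (star V).map C := by
    rw [hdiag, hdiag, Matrix.mul_sub, Matrix.sub_mul]
    congr 1
    · rw [mul_assoc, ← hcomm, ← mul_assoc, ← Matrix.map_mul (f := (C : ℝ →+* ℝ[X])), h1]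
      simp
    · rw [← Matrix.map_mul (f := (C : ℝ →+* ℝ[X])), ← Matrix.map_mul (f := (C : ℝ →+* ℝ[X]))]
  have hdet : ∀ W : Matrix I I ℝ, (W.map C).det = C W.det :=
    fun W => ((C : ℝ →+* ℝ[X]).map_det W).symm
  rw [Matrix.charpoly, key, Matrix.det_mul, Matrix.det_mul, hdet, hdet, Matrix.charpoly]
  have : C V.det * C (star V).det = 1 := by
    rw [← _root_.map_mul, ← Matrix.det_mul, h1, Matrix.det_one, _root_.map_one]
  calc C V.det * (Matrix.charmatrix B).det * C (star V).det
      = (Matrix.charmatrix B).det * (C V.det * C (star V).det) := by ring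
    _ = (Matrix.charmatrix B).det := by rw [this, mul_one]

lemma charpoly_diagonal' {I : Type*} [Fintype I] [DecidableEq I] (dg : I → ℝ) :
    (Matrix.diagonal dg).charpoly = ∏ i, (X - C (dg i)) := by
  have : Matrix.charmatrix (Matrix.diagonal dg)
      = Matrix.diagonal (fun i => X - C (dg i)) := by
    apply Matrix.ext; intro i j
    by_cases h : i = j
    · subst h; rw [Matrix.charmatrix_apply_eq, Matrix.diagonal_apply_eq dg i]; exact (Matrix.diagonal_apply_eq (fun i => (X : ℝ[X]) - C (dg i)) i).symm
    · rw [Matrix.charmatrix_apply_ne _ _ _ h, Matrix.diagonal_apply_ne _ h,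
        Matrix.diagonal_apply_ne _ h, map_zero, neg_zero]
  rw [Matrix.charpoly, this, Matrix.det_diagonal]

lemma charpoly_spectral {I : Type*} [Fintype I] [DecidableEq I]
    (U : Matrix.unitaryGroup I ℝ) (dg : I → ℝ) :
    ((U : Matrix I I ℝ) * Matrix.diagonal dg * star (U : Matrix I I ℝ)).charpoly
      = ∏ i, (X - C (dg i)) := by
  rw [charpoly_unitary_conj, charpoly_diagonal']

lemma roots_charpoly_spectral {I : Type*} [Fintype I] [DecidableEq I]
    {A : Matrix I I ℝ} (hA : A.IsHermitian) (U : Matrix.unitaryGroup I ℝ) (dg : I → ℝ)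
    (hAU : A = (U : Matrix I I ℝ) * Matrix.diagonal dg * star (U : Matrix I I ℝ)) :
    A.charpoly.roots = Finset.univ.val.map dg := by
  rw [hAU, charpoly_spectral]
  have : ∏ i, (X - C (dg i)) = ((Finset.univ.val.map dg).map fun a => X - C a).prod := by
    rw [Multiset.map_map]; rfl
  rw [this, Polynomial.roots_multiset_prod_X_sub_C]

lemma spectral_decomp {I : Type*} [Fintype I] [DecidableEq I]
    {A : Matrix I I ℝ} (hA : A.IsHermitian) :
    A = (hA.eigenvectorUnitary : Matrix I I ℝ) * Matrix.diagonal hA.eigenvalues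
        * star (hA.eigenvectorUnitary : Matrix I I ℝ) := by
  have := hA.spectral_theorem
  simpa using this

lemma eig_multiset {I : Type*} [Fintype I] [DecidableEq I]
    {A : Matrix I I ℝ} (hA : A.IsHermitian) :
    Finset.univ.val.map hA.eigenvalues = A.charpoly.roots :=
  (roots_charpoly_spectral hA hA.eigenvectorUnitary hA.eigenvalues (spectral_decomp hA)).symm

lemma trace_eq_sum_eigs {I : Type*} [Fintype I] [DecidableEq I]
    {A : Matrix I I ℝ} (hA : A.IsHermitian) :
    A.trace = ∑ i, hA.eigenvalues i := by
  conv_lhs => rw [spectral_decomp hA]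
  rw [Matrix.trace_mul_cycle, Matrix.mem_unitaryGroup_iff'.mp hA.eigenvectorUnitary.2, one_mul,
    Matrix.trace_diagonal]

lemma isHermitian_smul_real {I : Type*} [Fintype I] [DecidableEq I]
    {A : Matrix I I ℝ} (hA : A.IsHermitian) (c : ℝ) : (c • A).IsHermitian := by
  unfold Matrix.IsHermitian at *
  rw [Matrix.conjTranspose_smul, hA]
  simp

lemma eig_smul_multiset {I : Type*} [Fintype I] [DecidableEq I]
    {A : Matrix I I ℝ} (hA : A.IsHermitian) (c : ℝ) :
    Finset.univ.val.map (isHermitian_smul_real hA c).eigenvalues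
      = Finset.univ.val.map (fun i => c * hA.eigenvalues i) := by
  rw [eig_multiset (isHermitian_smul_real hA c)]
  apply roots_charpoly_spectral (isHermitian_smul_real hA c) hA.eigenvectorUnitary
  have := spectral_decomp hA
  calc c • A = c • ((hA.eigenvectorUnitary : Matrix I I ℝ) * Matrix.diagonal hA.eigenvalues
        * star (hA.eigenvectorUnitary : Matrix I I ℝ)) := by rw [← this]
    _ = (hA.eigenvectorUnitary : Matrix I I ℝ) * Matrix.diagonal (fun i => c * hA.eigenvalues i)
        * star (hA.eigenvectorUnitary : Matrix I I ℝ) := by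
      rw [show Matrix.diagonal (fun i => c * hA.eigenvalues i)
          = c • Matrix.diagonal hA.eigenvalues by rw [← Matrix.diagonal_smul]; rfl]
      rw [Matrix.mul_smul, Matrix.smul_mul]

lemma sum_comp_multiset {I : Type*} [Fintype I] (f : ℝ → ℝ) (g : I → ℝ) :
    ∑ i, f (g i) = ((Finset.univ.val.map g).map f).sum := by
  rw [Multiset.map_map]
  rfl

lemma nuclearNorm_smul {I : Type*} [Fintype I] [DecidableEq I]
    {A : Matrix I I ℝ} (hA : A.IsHermitian) {c : ℝ} (hc : 0 ≤ c) :
    nuclearNorm (c • A) = c * nuclearNorm A := by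
  rw [nuclearNorm, nuclearNorm, dif_pos hA, dif_pos (isHermitian_smul_real hA c)]
  rw [sum_comp_multiset (fun x => |x|) (isHermitian_smul_real hA c).eigenvalues,
    eig_smul_multiset hA c, ← sum_comp_multiset (fun x => |x|) (fun i => c * hA.eigenvalues i)]
  rw [Finset.mul_sum]
  congr 1; ext i
  rw [abs_mul, abs_of_nonneg hc]

lemma negEigSum_nonpos {I : Type*} [Fintype I] [DecidableEq I]
    (A : Matrix I I ℝ) : negEigSum A ≤ 0 := by
  rw [negEigSum]
  split
  · apply Finset.sum_nonpos
    intro i hi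
    exact le_of_lt (Finset.mem_filter.mp hi).2
  · exact le_refl 0

lemma nuclearNorm_eq_trace_sub {I : Type*} [Fintype I] [DecidableEq I]
    {A : Matrix I I ℝ} (hA : A.IsHermitian) :
    nuclearNorm A = A.trace - 2 * negEigSum A := by
  rw [nuclearNorm, negEigSum, dif_pos hA, dif_pos hA, trace_eq_sum_eigs hA]
  rw [Finset.sum_filter, Finset.mul_sum, ← Finset.sum_sub_distrib]
  apply Finset.sum_congr rfl
  intro i _
  by_cases h : hA.eigenvalues i < 0
  · rw [if_pos h, abs_of_neg h]; ring
  · rw [if_neg h, abs_of_nonneg (not_lt.mp h)]; ring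

end Aux

/-- Bound relating the optimal solution of the nuclear norm penalty problem, the value `v`
of the nuclear-norm-constrained problem, and `F₀ = max_i F_{i⋯i}`:
`2(ρ - v)·|Eig^-(X*_PNP(ρ))| ≤ v - F₀`. -/
theorem stmt6 {d n : ℕ} (𝓕 : (Fin d ⊕ Fin d → Fin n) → ℝ) (h𝓕 : SuperSym 𝓕)
    (F : Matrix (Fin d → Fin n) (Fin d → Fin n) ℝ)
    (hF : F = Matrix.of fun a b => 𝓕 (Sum.elim a b))
    (ρ v F0 : ℝ) (hρ : 0 < ρ)
    (Xρ : Matrix (Fin d → Fin n) (Fin d → Fin n) ℝ)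
    (hXρfeas : Xρ.IsSymm ∧ Xρ.trace = 1 ∧ SuperSym (matrInv Xρ))
    (hXρopt : ∀ X : Matrix (Fin d → Fin n) (Fin d → Fin n) ℝ,
        X.IsSymm → X.trace = 1 → SuperSym (matrInv X) →
        (F * X).trace - ρ * nuclearNorm X ≤ (F * Xρ).trace - ρ * nuclearNorm Xρ)
    (hv : IsGreatest {t | ∃ X : Matrix (Fin d → Fin n) (Fin d → Fin n) ℝ,
        X.IsSymm ∧ SuperSym (matrInv X) ∧ nuclearNorm X = 1 ∧ t = (F * X).trace} v)
    (hF0 : IsGreatest {t | ∃ i : Fin n, t = 𝓕 (fun _ => i)} F0) :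
    2 * (ρ - v) * |negEigSum Xρ| ≤ v - F0 := by
  classical
  obtain ⟨hsym, htr, hss⟩ := hXρfeas
  obtain ⟨i, hi⟩ := hF0.1
  set c : Fin d → Fin n := fun _ => i with hc
  set Y : Matrix (Fin d → Fin n) (Fin d → Fin n) ℝ :=
    Matrix.of (fun a b => (if a = c then (1:ℝ) else 0) * (if b = c then 1 else 0)) with hY
  have hYsym : Y.IsSymm := by
    unfold Matrix.IsSymm
    apply Matrix.ext; intro a b
    simp only [Matrix.transpose_apply, hY, Matrix.of_apply]
    ring
  have hYtr : Y.trace = 1 := by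
    rw [Matrix.trace]
    have : ∀ a, Y.diag a = if a = c then (1:ℝ) else 0 := by
      intro a
      simp only [Matrix.diag, hY, Matrix.of_apply]
      by_cases h : a = c <;> simp [h]
    rw [Finset.sum_congr rfl (fun a _ => this a), Finset.sum_ite_eq' Finset.univ c (fun _ => (1:ℝ))]
    simp
  have hYkey : ∀ j : Fin d ⊕ Fin d → Fin n,
      matrInv Y j = if (∀ s, j s = i) then (1:ℝ) else 0 := by
    intro j
    simp only [matrInv, hY, Matrix.of_apply]
    by_cases h : ∀ s, j s = i
    · have h1 : j ∘ Sum.inl = c := funext fun k => h (Sum.inl k)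
      have h2 : j ∘ Sum.inr = c := funext fun k => h (Sum.inr k)
      rw [if_pos h1, if_pos h2, if_pos h, mul_one]
    · push_neg at h
      obtain ⟨s, hs⟩ := h
      have : ¬ ((j ∘ Sum.inl = c) ∧ (j ∘ Sum.inr = c)) := by
        rintro ⟨h1, h2⟩
        cases s with
        | inl k => exact hs (congrFun h1 k)
        | inr k => exact hs (congrFun h2 k)
      have hr : (if (∀ s, j s = i) then (1:ℝ) else 0) = 0 := if_neg (fun hh => hs (hh s))
      rw [hr]
      by_cases h1 : j ∘ Sum.inl = c
      · have h2 : ¬ (j ∘ Sum.inr = c) := fun h2 => this ⟨h1, h2⟩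
        rw [if_neg h2, mul_zero]
      · rw [if_neg h1, zero_mul]
  have hYss : SuperSym (matrInv Y) := by
    intro σ j
    rw [hYkey, hYkey]
    exact if_congr ⟨fun h s => by simpa using h (σ.symm s), fun h s => h _⟩ rfl rfl
  have hYherm : Y.IsHermitian := isHermitian_of_isSymm hYsym
  have hYpsd : Y.PosSemidef := by
    let R : Matrix Unit (Fin d → Fin n) ℝ :=
      Matrix.of fun _ b => if b = c then (1:ℝ) else 0
    have hYeq : Y = Matrix.conjTranspose R * R := by
      apply Matrix.ext; intro a b
      simp [Matrix.mul_apply, Matrix.conjTranspose_apply, hY]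
      by_cases ha : a = c <;> by_cases hb : b = c <;> simp [R, ha, hb]
    rw [hYeq]
    exact Matrix.posSemidef_conjTranspose_mul_self _
  have hYnn : nuclearNorm Y = 1 := by
    rw [nuclearNorm, dif_pos hYherm]
    calc ∑ j, |hYherm.eigenvalues j| = ∑ j, hYherm.eigenvalues j :=
          Finset.sum_congr rfl (fun j _ => abs_of_nonneg (hYpsd.eigenvalues_nonneg j))
      _ = Y.trace := (trace_eq_sum_eigs hYherm).symm
      _ = 1 := hYtr
  have hcc : Sum.elim c c = fun _ : Fin d ⊕ Fin d => i := by
    funext s; cases s <;> rfl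
  have hYobj : (F * Y).trace = F0 := by
    rw [Matrix.trace]
    have h1 : ∀ a, (F * Y).diag a = if a = c then F a c else 0 := by
      intro a
      simp only [Matrix.diag, Matrix.mul_apply, hY, Matrix.of_apply]
      by_cases ha : a = c
      · simp [ha, mul_ite, Finset.sum_ite_eq']
      · simp [ha]
    rw [Finset.sum_congr rfl (fun a _ => h1 a),
      Finset.sum_ite_eq' Finset.univ c (fun a => F a c)]
    have : F c c = F0 := by rw [hF, Matrix.of_apply, hcc, ← hi]
    simp [this]
  -- facts about Xρ
  have hherm : Xρ.IsHermitian := isHermitian_of_isSymm hsym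
  have hNeq : nuclearNorm Xρ = 1 - 2 * negEigSum Xρ := by
    rw [nuclearNorm_eq_trace_sub hherm, htr]
  have hE0 : negEigSum Xρ ≤ 0 := negEigSum_nonpos Xρ
  have hNpos : 0 < nuclearNorm Xρ := by rw [hNeq]; linarith
  have hEabs : |negEigSum Xρ| = -negEigSum Xρ := abs_of_nonpos hE0
  -- inequality from optimality of Xρ
  have h1 := hXρopt Y hYsym hYtr hYss
  rw [hYnn, hYobj] at h1
  -- inequality from the definition of v
  have hmem : (nuclearNorm Xρ)⁻¹ * (F * Xρ).trace ∈
      {t | ∃ X : Matrix (Fin d → Fin n) (Fin d → Fin n) ℝ,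
        X.IsSymm ∧ SuperSym (matrInv X) ∧ nuclearNorm X = 1 ∧ t = (F * X).trace} := by
    refine ⟨(nuclearNorm Xρ)⁻¹ • Xρ, ?_, ?_, ?_, ?_⟩
    · unfold Matrix.IsSymm
      rw [Matrix.transpose_smul, hsym]
    · intro σ j
      have := hss σ j
      simp only [matrInv, Matrix.smul_apply, smul_eq_mul] at this ⊢
      rw [this]
    · rw [nuclearNorm_smul hherm (inv_nonneg.mpr (le_of_lt hNpos)),
        inv_mul_cancel₀ (ne_of_gt hNpos)]
    · rw [Matrix.mul_smul, Matrix.trace_smul, smul_eq_mul]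
  have h2 : (nuclearNorm Xρ)⁻¹ * (F * Xρ).trace ≤ v := hv.2 hmem
  have h3 : (F * Xρ).trace ≤ v * nuclearNorm Xρ := by
    have h4 := mul_le_mul_of_nonneg_left h2 (le_of_lt hNpos)
    calc (F * Xρ).trace = nuclearNorm Xρ * ((nuclearNorm Xρ)⁻¹ * (F * Xρ).trace) := by
          field_simp
      _ ≤ nuclearNorm Xρ * v := h4
      _ = v * nuclearNorm Xρ := mul_comm _ _
  rw [hEabs]
  have h5 : F0 - ρ ≤ v * nuclearNorm Xρ - ρ * nuclearNorm Xρ := by linarith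
  rw [hNeq] at h5
  nlinarith [h5]
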